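/- Let X ∈ ℝ^{d×p} with d ≥ p such that the top p×p block X_{(1:p,:)} is nonsingular, and let Y = [I_p; 0] ∈ ℝ^{d×p}. Define 𝒯(X) = X_{(p+1:d,:)} X_{(1:p,:)}^{-1}. Then for both the spectral norm and the Frobenius norm, ‖tan Θ(X, Y)‖ = ‖𝒯(X)‖, where Θ(X,Y) is the diagonal matrix of canonical angles between the column spaces of X and Y. -/

import Mathlib

open scoped Matrix

/-- Singular values of a real matrix, given as the square roots of the eigenvalues of `Aᴴ * A`. -/
noncomputable def sVals {m n : Type*} [Fintype m] [Fintype n] [DecidableEq n]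
    (A : Matrix m n ℝ) : n → ℝ :=
  fun j => Real.sqrt ((Matrix.posSemidef_conjTranspose_mul_self A).isHermitian.eigenvalues j)

/-- The square root of a positive semidefinite matrix, as `Matrix.PosSemidef.sqrt` was defined
in Mathlib of December 2024 (that declaration has since been removed). -/
noncomputable def posSemidefSqrt {n : Type*} [Fintype n] [DecidableEq n]
    {A : Matrix n n ℝ} (hA : A.PosSemidef) : Matrix n n ℝ :=
  (hA.isHermitian.eigenvectorUnitary : Matrix n n ℝ) *
    Matrix.diagonal ((Real.sqrt ·) ∘ hA.isHermitian.eigenvalues) *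
    (star hA.isHermitian.eigenvectorUnitary : Matrix n n ℝ)

/-- Spectral norm of a real matrix: the largest singular value. -/
noncomputable def spec {m n : Type*} [Fintype m] [Fintype n] [DecidableEq n]
    (A : Matrix m n ℝ) : ℝ := ⨆ j, sVals A j

/-- Frobenius norm of a real matrix. -/
noncomputable def frob {m n : Type*} [Fintype m] [Fintype n] (A : Matrix m n ℝ) : ℝ :=
  Real.sqrt (∑ i, ∑ j, (A i j) ^ 2)

section Helpers

open Matrix

variable {n : Type*} [Fintype n] [DecidableEq n]

private lemma conj_diag_sub_smul (U : Matrix.unitaryGroup n ℝ) (v : n → ℝ) (r : ℝ) :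
    (U : Matrix n n ℝ) * diagonal v * star (U : Matrix n n ℝ) - r • 1 =
      (U : Matrix n n ℝ) * (diagonal v - r • 1) * star (U : Matrix n n ℝ) := by
  have h1 : (U : Matrix n n ℝ) * star (U : Matrix n n ℝ) = 1 := mem_unitaryGroup_iff.mp U.2
  rw [Matrix.mul_sub, Matrix.sub_mul]
  simp [mul_smul_comm, smul_mul_assoc, h1]

omit [Fintype n] in
private lemma diag_sub_smul_one (v : n → ℝ) (r : ℝ) :
    diagonal v - r • (1 : Matrix n n ℝ) = diagonal (fun i => v i - r) := by
  ext i j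
  rcases eq_or_ne i j with h | h
  · subst h; simp
  · simp [Matrix.one_apply_ne h, Matrix.diagonal_apply_ne _ h]

private lemma conj_diag_det_sub (U : Matrix.unitaryGroup n ℝ) (v : n → ℝ) (r : ℝ) :
    ((U : Matrix n n ℝ) * diagonal v * star (U : Matrix n n ℝ) - r • 1).det =
      ∏ i, (v i - r) := by
  have h1 : (U : Matrix n n ℝ) * star (U : Matrix n n ℝ) = 1 := mem_unitaryGroup_iff.mp U.2
  rw [conj_diag_sub_smul, det_mul_right_comm, h1, one_mul, diag_sub_smul_one, det_diagonal]

private lemma conj_diag_det (U : Matrix.unitaryGroup n ℝ) (v : n → ℝ) :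
    ((U : Matrix n n ℝ) * diagonal v * star (U : Matrix n n ℝ)).det = ∏ i, v i := by
  simpa using conj_diag_det_sub U v 0

private lemma conj_diag_trace (U : Matrix.unitaryGroup n ℝ) (v : n → ℝ) :
    ((U : Matrix n n ℝ) * diagonal v * star (U : Matrix n n ℝ)).trace = ∑ i, v i := by
  have h1 : star (U : Matrix n n ℝ) * (U : Matrix n n ℝ) = 1 := mem_unitaryGroup_iff'.mp U.2
  rw [trace_mul_comm, ← Matrix.mul_assoc, h1, one_mul, trace_diagonal]

private lemma conj_diag_inv (U : Matrix.unitaryGroup n ℝ) (v : n → ℝ) (hv : ∀ i, v i ≠ 0) :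
    ((U : Matrix n n ℝ) * diagonal v * star (U : Matrix n n ℝ))⁻¹ =
      (U : Matrix n n ℝ) * diagonal (fun i => (v i)⁻¹) * star (U : Matrix n n ℝ) := by
  have h2 : star (U : Matrix n n ℝ) * (U : Matrix n n ℝ) = 1 := mem_unitaryGroup_iff'.mp U.2
  apply inv_eq_right_inv
  calc (U : Matrix n n ℝ) * diagonal v * star (U : Matrix n n ℝ) *
        ((U : Matrix n n ℝ) * diagonal (fun i => (v i)⁻¹) * star (U : Matrix n n ℝ))
      = (U : Matrix n n ℝ) * (diagonal v * ((star (U : Matrix n n ℝ) * (U : Matrix n n ℝ)) *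
          diagonal (fun i => (v i)⁻¹))) * star (U : Matrix n n ℝ) := by
        simp only [Matrix.mul_assoc]
    _ = 1 := by
        rw [h2, Matrix.one_mul, diagonal_mul_diagonal]
        have : (fun i => v i * (v i)⁻¹) = fun _ : n => (1:ℝ) := by
          funext i; exact mul_inv_cancel₀ (hv i)
        rw [this, diagonal_one, Matrix.mul_one, mem_unitaryGroup_iff.mp U.2]

private lemma real_spectral {A : Matrix n n ℝ} (hA : A.IsHermitian) :
    A = (hA.eigenvectorUnitary : Matrix n n ℝ) * diagonal hA.eigenvalues *
      star (hA.eigenvectorUnitary : Matrix n n ℝ) := by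
  conv_lhs => rw [hA.spectral_theorem]
  congr 1

private lemma herm_det_sub (A : Matrix n n ℝ) (hA : A.IsHermitian) (r : ℝ) :
    (A - r • 1).det = ∏ i, (hA.eigenvalues i - r) := by
  conv_lhs => rw [real_spectral hA]
  exact conj_diag_det_sub _ _ r

private lemma herm_trace (A : Matrix n n ℝ) (hA : A.IsHermitian) :
    A.trace = ∑ i, hA.eigenvalues i := by
  conv_lhs => rw [real_spectral hA]
  exact conj_diag_trace _ _

private lemma herm_trace_inv (A : Matrix n n ℝ) (hA : A.IsHermitian)
    (hv : ∀ i, hA.eigenvalues i ≠ 0) :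
    A⁻¹.trace = ∑ i, (hA.eigenvalues i)⁻¹ := by
  conv_lhs => rw [real_spectral hA]
  rw [conj_diag_inv _ _ hv, conj_diag_trace]

private lemma posSemidefSqrt_isHermitian {A : Matrix n n ℝ} (hA : A.PosSemidef) :
    (posSemidefSqrt hA)ᴴ = posSemidefSqrt hA := by
  simp [posSemidefSqrt, Matrix.conjTranspose_mul, Matrix.star_eq_conjTranspose, Matrix.mul_assoc]

private lemma posSemidefSqrt_mul_self {A : Matrix n n ℝ} (hA : A.PosSemidef) :
    posSemidefSqrt hA * posSemidefSqrt hA = A := by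
  have h2 : star (hA.isHermitian.eigenvectorUnitary : Matrix n n ℝ) *
      (hA.isHermitian.eigenvectorUnitary : Matrix n n ℝ) = 1 :=
    mem_unitaryGroup_iff'.mp hA.isHermitian.eigenvectorUnitary.2
  have key : diagonal ((Real.sqrt ·) ∘ hA.isHermitian.eigenvalues) *
      diagonal ((Real.sqrt ·) ∘ hA.isHermitian.eigenvalues) = diagonal hA.isHermitian.eigenvalues := by
    rw [diagonal_mul_diagonal]
    congr 1
    funext i
    exact Real.mul_self_sqrt (hA.eigenvalues_nonneg i)
  conv_rhs => rw [real_spectral hA.isHermitian]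
  rw [← key]
  simp only [posSemidefSqrt, Matrix.mul_assoc]
  rw [← Matrix.mul_assoc _ (hA.isHermitian.eigenvectorUnitary : Matrix n n ℝ), h2, Matrix.one_mul]

private lemma XY_eq {p m : ℕ} (X : Matrix (Fin p ⊕ Fin m) (Fin p) ℝ) :
    Xᴴ * Matrix.fromRows (1 : Matrix (Fin p) (Fin p) ℝ) (0 : Matrix (Fin m) (Fin p) ℝ)
      = (X.submatrix Sum.inl id)ᴴ := by
  ext i j
  simp [Matrix.mul_apply, Fintype.sum_sum_type, Matrix.fromRows_apply_inl,
    Matrix.fromRows_apply_inr, Matrix.one_apply,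
    Finset.sum_ite_eq', Matrix.conjTranspose_apply]

private lemma XX_eq {p m : ℕ} (X : Matrix (Fin p ⊕ Fin m) (Fin p) ℝ) :
    Xᴴ * X = (X.submatrix Sum.inl id)ᴴ * (X.submatrix Sum.inl id)
      + (X.submatrix Sum.inr id)ᴴ * (X.submatrix Sum.inr id) := by
  ext i j
  simp [Matrix.mul_apply, Fintype.sum_sum_type, Matrix.conjTranspose_apply]

end Helpers

theorem stmt0 {p m : ℕ} (X : Matrix (Fin p ⊕ Fin m) (Fin p) ℝ)
    (hX : IsUnit (X.submatrix Sum.inl id).det) :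
    let Y : Matrix (Fin p ⊕ Fin m) (Fin p) ℝ :=
      Matrix.fromRows (1 : Matrix (Fin p) (Fin p) ℝ) (0 : Matrix (Fin m) (Fin p) ℝ)
    let M := (posSemidefSqrt (Matrix.posSemidef_conjTranspose_mul_self X))⁻¹ * (Xᴴ * Y)
    let θ : Fin p → ℝ := fun j => Real.arccos (sVals M j)
    let T := X.submatrix Sum.inr id * (X.submatrix Sum.inl id)⁻¹
    (⨆ j, Real.tan (θ j)) = spec T ∧
    ∑ j, Real.tan (θ j) ^ 2 = ∑ j, (sVals T j) ^ 2 := by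
  intro Y M θ T
  have hYdef : Y = Matrix.fromRows 1 0 := rfl
  have hM0 : M = (posSemidefSqrt (Matrix.posSemidef_conjTranspose_mul_self X))⁻¹ * (Xᴴ * Y) := rfl
  have hθdef : ∀ j, θ j = Real.arccos (sVals M j) := fun _ => rfl
  have hTdef : T = X.submatrix Sum.inr id * (X.submatrix Sum.inl id)⁻¹ := rfl
  clear_value T θ M Y
  set X₁ := X.submatrix Sum.inl id with hX₁def
  set X₂ := X.submatrix Sum.inr id with hX₂def
  have hX1' : IsUnit (X₁ᴴ).det := by
    rw [Matrix.det_conjTranspose, star_trivial]; exact hX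
  -- eigen data
  set hBpsd := Matrix.posSemidef_conjTranspose_mul_self T with hBpsddef
  set hB : (Tᴴ * T).IsHermitian := hBpsd.isHermitian with hBdef
  set μ : Fin p → ℝ := hB.eigenvalues with hμdef
  have hμ0 : ∀ k, 0 ≤ μ k := hBpsd.eigenvalues_nonneg
  have h1μ : ∀ k, (1 : ℝ) + μ k ≠ 0 := fun k => by
    have := hμ0 k; intro hcon; linarith
  set hApsd := Matrix.posSemidef_conjTranspose_mul_self M with hApsddef
  set hA : (Mᴴ * M).IsHermitian := hApsd.isHermitian with hAdef
  set lam : Fin p → ℝ := hA.eigenvalues with hlamdef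
  -- basic matrix identities
  have hTX : T * X₁ = X₂ := by
    rw [hTdef, Matrix.mul_assoc, Matrix.nonsing_inv_mul _ hX, Matrix.mul_one]
  have hXX2 : Xᴴ * X = X₁ᴴ * ((1 + Tᴴ * T) * X₁) := by
    have e1 : X₁ᴴ * ((1 + Tᴴ * T) * X₁) = X₁ᴴ * X₁ + (T * X₁)ᴴ * (T * X₁) := by
      rw [Matrix.conjTranspose_mul]
      noncomm_ring
      simp only [Matrix.mul_assoc]
    rw [XX_eq X, e1, hTX]
  have hMdef : M = (posSemidefSqrt (Matrix.posSemidef_conjTranspose_mul_self X))⁻¹ * X₁ᴴ := by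
    rw [hM0, hYdef, XY_eq]
  have hMM : Mᴴ * M = (1 + Tᴴ * T)⁻¹ := by
    set P := Matrix.posSemidef_conjTranspose_mul_self X with hPdef
    set R := posSemidefSqrt P with hRdef
    have hRh : (R⁻¹)ᴴ = R⁻¹ := by
      rw [Matrix.conjTranspose_nonsing_inv, posSemidefSqrt_isHermitian P]
    have hR2 : R⁻¹ * R⁻¹ = (Xᴴ * X)⁻¹ := by
      rw [← Matrix.mul_inv_rev, posSemidefSqrt_mul_self P]
    have hXXinv : (Xᴴ * X)⁻¹ = X₁⁻¹ * ((1 + Tᴴ * T)⁻¹ * (X₁ᴴ)⁻¹) := by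
      rw [hXX2, Matrix.mul_inv_rev, Matrix.mul_inv_rev, Matrix.mul_assoc]
    calc Mᴴ * M = X₁ * ((R⁻¹ * R⁻¹) * X₁ᴴ) := by
          rw [hMdef, Matrix.conjTranspose_mul, hRh, Matrix.conjTranspose_conjTranspose]
          simp only [Matrix.mul_assoc]
      _ = X₁ * (X₁⁻¹ * ((1 + Tᴴ * T)⁻¹ * ((X₁ᴴ)⁻¹ * X₁ᴴ))) := by
          rw [hR2, hXXinv]
          simp only [Matrix.mul_assoc]
      _ = (1 + Tᴴ * T)⁻¹ := by
          rw [Matrix.nonsing_inv_mul _ hX1', Matrix.mul_one, ← Matrix.mul_assoc,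
            Matrix.mul_nonsing_inv _ hX, Matrix.one_mul]
  -- spectral decomposition of 1 + TᴴT
  set U := hB.eigenvectorUnitary with hUdef
  have hBspec : (1 : Matrix (Fin p) (Fin p) ℝ) + Tᴴ * T =
      (U : Matrix (Fin p) (Fin p) ℝ) * Matrix.diagonal (fun k => 1 + μ k) *
        star (U : Matrix (Fin p) (Fin p) ℝ) := by
    have hd : Matrix.diagonal (fun k => 1 + μ k) =
        1 + Matrix.diagonal μ := by
      rw [← Matrix.diagonal_one, ← Matrix.diagonal_add]
    rw [hd, Matrix.mul_add, Matrix.add_mul, Matrix.mul_one,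
      Matrix.mem_unitaryGroup_iff.mp U.2, ← real_spectral hB]
  -- root correspondence
  have hroot : ∀ r : ℝ, ∏ j, (lam j - r) = ∏ k, ((1 + μ k)⁻¹ - r) := by
    intro r
    rw [← herm_det_sub _ hA r, hMM, hBspec, conj_diag_inv _ _ h1μ, conj_diag_det_sub]
  have hlam : ∀ j, ∃ k, lam j = (1 + μ k)⁻¹ := by
    intro j
    have h0 : ∏ j', (lam j' - lam j) = 0 :=
      Finset.prod_eq_zero (Finset.mem_univ j) (by ring)
    have h := hroot (lam j)
    rw [h0] at h
    obtain ⟨k, -, hk⟩ := Finset.prod_eq_zero_iff.mp h.symm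
    exact ⟨k, (sub_eq_zero.mp hk).symm⟩
  have hμlam : ∀ k, ∃ j, lam j = (1 + μ k)⁻¹ := by
    intro k
    have h0 : ∏ k', ((1 + μ k')⁻¹ - (1 + μ k)⁻¹) = 0 :=
      Finset.prod_eq_zero (Finset.mem_univ k) (by ring)
    have h := hroot ((1 + μ k)⁻¹)
    rw [h0] at h
    obtain ⟨j, -, hj⟩ := Finset.prod_eq_zero_iff.mp h
    exact ⟨j, sub_eq_zero.mp hj⟩
  -- tangent formula
  have htan : ∀ j k, lam j = (1 + μ k)⁻¹ → Real.tan (θ j) = Real.sqrt (μ k) := by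
    intro j k h
    have h1 : (0:ℝ) < 1 + μ k := by linarith [hμ0 k]
    have hl0 : 0 ≤ lam j := by rw [h]; exact (inv_pos.mpr h1).le
    have hθ : θ j = Real.arccos (Real.sqrt (lam j)) := by rw [hθdef]; rfl
    rw [hθ, Real.tan_arccos, Real.sq_sqrt hl0, h]
    have hle : (1 + μ k)⁻¹ ≤ 1 := by
      rw [inv_le_one_iff₀]; right; linarith [hμ0 k]
    rw [← Real.sqrt_div (by linarith : (0:ℝ) ≤ 1 - (1 + μ k)⁻¹)]
    congr 1
    field_simp
    ring
  -- the sum identity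
  have hdet1B : IsUnit (1 + Tᴴ * T).det := by
    rw [hBspec, conj_diag_det]
    exact isUnit_iff_ne_zero.mpr (Finset.prod_ne_zero_iff.mpr fun k _ => h1μ k)
  have hlamne : ∀ j, lam j ≠ 0 := by
    intro j
    obtain ⟨k, hk⟩ := hlam j
    rw [hk]
    exact inv_ne_zero (h1μ k)
  have hsum : ∑ j, Real.tan (θ j) ^ 2 = ∑ j, (sVals T j) ^ 2 := by
    have hsvT : ∀ k, sVals T k = Real.sqrt (μ k) := fun k => rfl
    calc ∑ j, Real.tan (θ j) ^ 2 = ∑ j, ((lam j)⁻¹ - 1) := by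
          refine Finset.sum_congr rfl fun j _ => ?_
          obtain ⟨k, hk⟩ := hlam j
          rw [htan j k hk, Real.sq_sqrt (hμ0 k), hk, inv_inv]
          ring
      _ = (∑ j, (lam j)⁻¹) - p := by
          rw [Finset.sum_sub_distrib, Finset.sum_const, Finset.card_univ, Fintype.card_fin]
          simp [nsmul_eq_mul]
      _ = (Mᴴ * M)⁻¹.trace - p := by rw [herm_trace_inv _ hA hlamne]
      _ = (1 + Tᴴ * T).trace - p := by
          rw [hMM, Matrix.nonsing_inv_nonsing_inv _ hdet1B]
      _ = (Tᴴ * T).trace := by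
          rw [Matrix.trace_add, Matrix.trace_one]
          simp
      _ = ∑ k, μ k := herm_trace _ hB
      _ = ∑ k, (sVals T k) ^ 2 := by
          refine Finset.sum_congr rfl fun k _ => ?_
          rw [hsvT k, Real.sq_sqrt (hμ0 k)]
  refine ⟨?_, hsum⟩
  -- the sup identity
  rcases Nat.eq_zero_or_pos p with hp | hp
  · have : IsEmpty (Fin p) := by rw [hp]; infer_instance
    rw [show spec T = ⨆ k, sVals T k from rfl, iSup_of_empty', iSup_of_empty']
  · have : Nonempty (Fin p) := Fin.pos_iff_nonempty.mp hp
    apply le_antisymm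
    · refine ciSup_le fun j => ?_
      obtain ⟨k, hk⟩ := hlam j
      rw [htan j k hk, show Real.sqrt (μ k) = sVals T k from rfl]
      exact le_ciSup (f := sVals T) (Set.Finite.bddAbove (Set.finite_range _)) k
    · rw [show spec T = ⨆ k, sVals T k from rfl]
      refine ciSup_le fun k => ?_
      obtain ⟨j, hj⟩ := hμlam k
      rw [show sVals T k = Real.sqrt (μ k) from rfl, ← htan j k hj]
      exact le_ciSup (f := fun j => Real.tan (θ j))
        (Set.Finite.bddAbove (Set.finite_range _)) j
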